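/- For every Δ ≥ 2, there exist graphs G₁ and G₂ with Δ(G₁) = Δ(G₂) = Δ, χ'(G₁) = χ'(G₂) = Δ, and G₁ ∪ G₂ bipartite, such that the simultaneous chromatic index χ'(G₁,G₂) is at least Δ+1; i.e., no single edge-colouring of G₁ ∪ G₂ using Δ colours is simultaneously a proper edge-colouring of G₁ and of G₂. -/

import Mathlib

/-- An edge-colouring (with colours in `Fin n`, assigned to elements of
`Sym2 V`) is proper for a simple graph `G` if distinct edges of `G` sharing a
vertex receive distinct colours. -/
def IsProperEdgeColoring {V : Type*} {n : ℕ} (G : SimpleGraph V)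
    (c : Sym2 V → Fin n) : Prop :=
  ∀ e ∈ G.edgeSet, ∀ f ∈ G.edgeSet, e ≠ f → (∃ v, v ∈ e ∧ v ∈ f) → c e ≠ c f

set_option linter.unusedSectionVars false

namespace Gadget

abbrev Vt (Δ : ℕ) : Type := (Fin Δ ⊕ Fin Δ) ⊕ Bool

variable {Δ : ℕ} [NeZero Δ]

def vX (i : Fin Δ) : Vt Δ := Sum.inl (Sum.inl i)
def vY (j : Fin Δ) : Vt Δ := Sum.inl (Sum.inr j)
def va : Vt Δ := Sum.inr true
def vb : Vt Δ := Sum.inr false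

def adj1 : Vt Δ → Vt Δ → Bool
  | Sum.inl (Sum.inl i), Sum.inl (Sum.inr j) => !(i == 0 && j == 0)
  | Sum.inr true, Sum.inl (Sum.inl i) => i == 0
  | Sum.inr false, Sum.inl (Sum.inr j) => j == 0
  | _, _ => false

def adj2 : Vt Δ → Vt Δ → Bool
  | Sum.inl (Sum.inl _), Sum.inl (Sum.inr j) => j == 0
  | Sum.inr true, Sum.inl (Sum.inl i) => i == 0
  | _, _ => false

def G1 (Δ : ℕ) [NeZero Δ] : SimpleGraph (Vt Δ) :=
  SimpleGraph.fromRel (fun u v => adj1 u v = true)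
def G2 (Δ : ℕ) [NeZero Δ] : SimpleGraph (Vt Δ) :=
  SimpleGraph.fromRel (fun u v => adj2 u v = true)

instance : DecidableRel (G1 Δ).Adj := fun u v =>
  decidable_of_iff _ (SimpleGraph.fromRel_adj _ u v).symm
instance : DecidableRel (G2 Δ).Adj := fun u v =>
  decidable_of_iff _ (SimpleGraph.fromRel_adj _ u v).symm

lemma G1_adj (u v : Vt Δ) : (G1 Δ).Adj u v ↔ u ≠ v ∧ (adj1 u v ∨ adj1 v u) :=
  SimpleGraph.fromRel_adj _ u v
lemma G2_adj (u v : Vt Δ) : (G2 Δ).Adj u v ↔ u ≠ v ∧ (adj2 u v ∨ adj2 v u) :=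
  SimpleGraph.fromRel_adj _ u v

lemma adjXY1 (i j : Fin Δ) (h : ¬(i = 0 ∧ j = 0)) : (G1 Δ).Adj (vX i) (vY j) := by
  simp [G1_adj, adj1, vX, vY, h]; tauto
lemma adjaX1 : (G1 Δ).Adj va (vX 0) := by simp [G1_adj, adj1, va, vX]
lemma adjbY1 : (G1 Δ).Adj vb (vY 0) := by simp [G1_adj, adj1, vb, vY]
lemma adjXY2 (i : Fin Δ) : (G2 Δ).Adj (vX i) (vY 0) := by simp [G2_adj, adj2, vX, vY]
lemma adjaX2 : (G2 Δ).Adj va (vX 0) := by simp [G2_adj, adj2, va, vX]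

lemma eqXY (i j i' j' : Fin Δ) : s(vX i, vY j) = s(vX i', vY j') ↔ i = i' ∧ j = j' := by
  simp [Sym2.eq_iff, vX, vY]

/-- classification of G1 edges -/
lemma G1_edge (e : Sym2 (Vt Δ)) (he : e ∈ (G1 Δ).edgeSet) :
    (∃ i j, ¬(i = 0 ∧ j = 0) ∧ e = s(vX i, vY j)) ∨ e = s(va, vX 0) ∨ e = s(vb, vY 0) := by
  induction e with
  | _ u v =>
    rw [SimpleGraph.mem_edgeSet, G1_adj] at he
    obtain ⟨-, h | h⟩ := he <;>
    · rcases u with (i | j) | (_ | _) <;> rcases v with (i' | j') | (_ | _) <;>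
        simp_all [adj1, vX, vY, va, vb, Sym2.eq_swap] <;> tauto

lemma G2_edge (e : Sym2 (Vt Δ)) (he : e ∈ (G2 Δ).edgeSet) :
    (∃ i, e = s(vX i, vY 0)) ∨ e = s(va, vX 0) := by
  induction e with
  | _ u v =>
    rw [SimpleGraph.mem_edgeSet, G2_adj] at he
    obtain ⟨-, h | h⟩ := he <;>
    · rcases u with (i | j) | (_ | _) <;> rcases v with (i' | j') | (_ | _) <;>
        simp_all [adj2, vX, vY, va, vb, Sym2.eq_swap] <;> tauto

end Gadget

namespace Gadget2
open Gadget
variable {Δ : ℕ} [NeZero Δ]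

/-! ### Colourings witnessing the chromatic index upper bounds -/

def col1 : Vt Δ → Vt Δ → Fin Δ
  | Sum.inl (Sum.inl i), Sum.inl (Sum.inr j) => i + j
  | _, _ => 0

def c1 (Δ : ℕ) [NeZero Δ] : Sym2 (Vt Δ) → Fin Δ :=
  Sym2.lift ⟨fun u v => col1 u v + col1 v u, fun _ _ => add_comm _ _⟩

@[simp] lemma c1_mk (u v : Vt Δ) : c1 Δ s(u, v) = col1 u v + col1 v u := rfl

def col2 : Vt Δ → Vt Δ → Fin Δ
  | Sum.inl (Sum.inl i), Sum.inl (Sum.inr _) => i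
  | Sum.inr true, Sum.inl (Sum.inl _) => 1
  | _, _ => 0

def c2 (Δ : ℕ) [NeZero Δ] : Sym2 (Vt Δ) → Fin Δ :=
  Sym2.lift ⟨fun u v => col2 u v + col2 v u, fun _ _ => add_comm _ _⟩

@[simp] lemma c2_mk (u v : Vt Δ) : c2 Δ s(u, v) = col2 u v + col2 v u := rfl

lemma c1_proper : IsProperEdgeColoring (G1 Δ) (c1 Δ) := by
  intro e he f hf hne hsh
  obtain ⟨v, hv1, hv2⟩ := hsh
  rcases G1_edge e he with ⟨i, j, hij, rfl⟩ | rfl | rfl <;>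
    rcases G1_edge f hf with ⟨i', j', hij', rfl⟩ | rfl | rfl <;>
    rw [Sym2.mem_iff] at hv1 hv2
  · -- XY vs XY
    have hne' : ¬(i = i' ∧ j = j') := by
      rintro ⟨h1, h2⟩; exact hne (by rw [h1, h2])
    have hcases : i = i' ∨ j = j' := by
      rcases hv1 with rfl | rfl <;> rcases hv2 with h | h <;> simp_all [vX, vY]
    simp only [c1_mk, vX, vY, col1, add_zero]
    intro hc
    rcases hcases with rfl | rfl
    · exact hne' ⟨rfl, add_left_cancel hc⟩
    · exact hne' ⟨add_right_cancel hc, rfl⟩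
  · -- XY vs aX0
    have hi : i = 0 := by
      rcases hv1 with rfl | rfl <;> rcases hv2 with h | h <;> simp_all [vX, vY, va]
    subst hi
    have hj : j ≠ 0 := fun h => hij ⟨rfl, h⟩
    simp [col1, va, vX, vY, hj]
  · -- XY vs bY0
    have hj : j = 0 := by
      rcases hv1 with rfl | rfl <;> rcases hv2 with h | h <;> simp_all [vX, vY, vb]
    subst hj
    have hi : i ≠ 0 := fun h => hij ⟨h, rfl⟩
    simp [col1, vb, vX, vY, hi]
  · -- aX0 vs XY
    have hi : i' = 0 := by
      rcases hv1 with rfl | rfl <;> rcases hv2 with h | h <;> simp_all [vX, vY, va]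
    subst hi
    have hj : j' ≠ 0 := fun h => hij' ⟨rfl, h⟩
    have hj' := Ne.symm hj
    simp [col1, va, vX, vY, hj']
  · exact absurd rfl hne
  · -- aX0 vs bY0 : no common vertex
    exfalso; rcases hv1 with rfl | rfl <;> rcases hv2 with h | h <;> simp_all [vX, vY, va, vb]
  · -- bY0 vs XY
    have hj : j' = 0 := by
      rcases hv1 with rfl | rfl <;> rcases hv2 with h | h <;> simp_all [vX, vY, vb]
    subst hj
    have hi : i' ≠ 0 := fun h => hij' ⟨h, rfl⟩
    have hi' := Ne.symm hi
    simp [col1, vb, vX, vY, hi']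
  · exfalso; rcases hv1 with rfl | rfl <;> rcases hv2 with h | h <;> simp_all [vX, vY, va, vb]
  · exact absurd rfl hne

lemma c2_proper (hΔ : 2 ≤ Δ) : IsProperEdgeColoring (G2 Δ) (c2 Δ) := by
  have h10 : (1 : Fin Δ) ≠ 0 := by
    intro he; have := congrArg Fin.val he; rw [Fin.val_one'] at this; simp at this; omega
  intro e he f hf hne hsh
  obtain ⟨v, hv1, hv2⟩ := hsh
  rcases G2_edge e he with ⟨i, rfl⟩ | rfl <;>
    rcases G2_edge f hf with ⟨i', rfl⟩ | rfl <;>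
    rw [Sym2.mem_iff] at hv1 hv2
  · -- XY0 vs X'Y0
    have hii : i ≠ i' := by
      intro h; subst h; exact hne rfl
    simp [col2, vX, vY, hii]
  · -- XY0 vs aX0
    have hi : i = 0 := by
      rcases hv1 with rfl | rfl <;> rcases hv2 with h | h <;> simp_all [vX, vY, va]
    subst hi
    simp [col2, va, vX, vY, h10.symm]
  · have hi : i' = 0 := by
      rcases hv1 with rfl | rfl <;> rcases hv2 with h | h <;> simp_all [vX, vY, va]
    subst hi
    simp [col2, va, vX, vY, h10]
  · exact absurd rfl hne

/-! ### Chromatic index lower bounds -/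

lemma lb1 (hΔ : 2 ≤ Δ) (n : ℕ) (c : Sym2 (Vt Δ) → Fin n)
    (hc : IsProperEdgeColoring (G1 Δ) c) : Δ ≤ n := by
  have h10 : (1 : Fin Δ) ≠ 0 := by
    intro he; have := congrArg Fin.val he; rw [Fin.val_one'] at this; simp at this; omega
  have hinj : Function.Injective (fun j : Fin Δ => c s(vX 1, vY j)) := by
    intro j j' h
    by_contra hjj
    refine hc _ ?_ _ ?_ ?_ ⟨vX 1, Sym2.mem_mk_left _ _, Sym2.mem_mk_left _ _⟩ h
    · exact (SimpleGraph.mem_edgeSet _).2 (adjXY1 _ _ (by tauto))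
    · exact (SimpleGraph.mem_edgeSet _).2 (adjXY1 _ _ (by tauto))
    · rw [Ne, eqXY]; tauto
  simpa using Fintype.card_le_of_injective _ hinj

lemma lb2 (n : ℕ) (c : Sym2 (Vt Δ) → Fin n)
    (hc : IsProperEdgeColoring (G2 Δ) c) : Δ ≤ n := by
  have hinj : Function.Injective (fun i : Fin Δ => c s(vX i, vY 0)) := by
    intro i i' h
    by_contra hii
    refine hc _ ?_ _ ?_ ?_ ⟨vY 0, Sym2.mem_mk_right _ _, Sym2.mem_mk_right _ _⟩ h
    · exact (SimpleGraph.mem_edgeSet _).2 (adjXY2 _)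
    · exact (SimpleGraph.mem_edgeSet _).2 (adjXY2 _)
    · rw [Ne, eqXY]; tauto
  simpa using Fintype.card_le_of_injective _ hinj

end Gadget2

namespace Gadget3
open Gadget Gadget2 Finset
variable {Δ : ℕ} [NeZero Δ]

lemma vX_inj : Function.Injective (vX : Fin Δ → Vt Δ) := by
  intro i j h; simpa [vX] using h
lemma vY_inj : Function.Injective (vY : Fin Δ → Vt Δ) := by
  intro i j h; simpa [vY] using h

lemma one_ne_zero' (hΔ : 2 ≤ Δ) : (1 : Fin Δ) ≠ 0 := by
  intro he; have := congrArg Fin.val he; rw [Fin.val_one'] at this; simp at this; omega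

/-! ### Degrees -/

lemma nbhd2_Y0 : (G2 Δ).neighborFinset (vY 0) = Finset.univ.image vX := by
  ext w
  rw [SimpleGraph.mem_neighborFinset]
  rcases w with (i | j) | (_ | _) <;>
    simp [SimpleGraph.mem_neighborFinset, G2_adj, adj2, vX, vY, va, vb]

lemma deg2_Y0 : (G2 Δ).degree (vY 0) = Δ := by
  rw [SimpleGraph.degree, nbhd2_Y0, Finset.card_image_of_injective _ vX_inj]
  simp

lemma deg2_le (hΔ : 2 ≤ Δ) (v : Vt Δ) : (G2 Δ).degree v ≤ Δ := by
  rw [SimpleGraph.degree]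
  rcases v with (i | j) | t
  · calc ((G2 Δ).neighborFinset (Sum.inl (Sum.inl i))).card
        ≤ ({vY 0, va} : Finset (Vt Δ)).card := by
          apply Finset.card_le_card
          intro w hw
          rcases w with (i' | j') | (_ | _) <;>
            simp_all [SimpleGraph.mem_neighborFinset, G2_adj, adj2, vX, vY, va, vb]
      _ ≤ 2 := (Finset.card_insert_le _ _).trans (by simp)
      _ ≤ Δ := hΔ
  · calc ((G2 Δ).neighborFinset (Sum.inl (Sum.inr j))).card
        ≤ (Finset.univ.image (vX (Δ := Δ))).card := by
          apply Finset.card_le_card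
          intro w hw
          rcases w with (i' | j') | (_ | _) <;>
            simp_all [SimpleGraph.mem_neighborFinset, G2_adj, adj2, vX, vY, va, vb]
      _ = Δ := by rw [Finset.card_image_of_injective _ vX_inj]; simp
  · calc ((G2 Δ).neighborFinset (Sum.inr t)).card
        ≤ ({vX 0} : Finset (Vt Δ)).card := by
          apply Finset.card_le_card
          intro w hw
          rcases w with (i' | j') | (_ | _) <;> rcases t <;>
            simp_all [SimpleGraph.mem_neighborFinset, G2_adj, adj2, vX, vY, va, vb]
      _ ≤ Δ := by simp; omega

lemma nbhd1_X1 (hΔ : 2 ≤ Δ) : (G1 Δ).neighborFinset (vX 1) = Finset.univ.image vY := by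
  have h10 : (1 : Fin Δ) ≠ 0 := one_ne_zero' hΔ
  ext w
  rw [SimpleGraph.mem_neighborFinset]
  rcases w with (i | j) | (_ | _) <;>
    simp_all [SimpleGraph.mem_neighborFinset, G1_adj, adj1, vX, vY, va, vb]

lemma deg1_X1 (hΔ : 2 ≤ Δ) : (G1 Δ).degree (vX 1) = Δ := by
  rw [SimpleGraph.degree, nbhd1_X1 hΔ, Finset.card_image_of_injective _ vY_inj]
  simp

lemma deg1_le (hΔ : 2 ≤ Δ) (v : Vt Δ) : (G1 Δ).degree v ≤ Δ := by
  rw [SimpleGraph.degree]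
  rcases v with (i | j) | t
  · by_cases hi : i = 0
    · subst hi
      calc ((G1 Δ).neighborFinset (Sum.inl (Sum.inl 0))).card
          ≤ (insert va ((Finset.univ.image (vY (Δ := Δ))).erase (vY 0))).card := by
            apply Finset.card_le_card
            intro w hw
            rcases w with (i' | j') | (_ | _) <;>
              simp_all [SimpleGraph.mem_neighborFinset, G1_adj, adj1, vX, vY, va, vb]
        _ ≤ ((Finset.univ.image (vY (Δ := Δ))).erase (vY 0)).card + 1 :=
            Finset.card_insert_le _ _
        _ ≤ Δ := by
            rw [Finset.card_erase_of_mem (by simp), Finset.card_image_of_injective _ vY_inj]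
            simp; omega
    · calc ((G1 Δ).neighborFinset (Sum.inl (Sum.inl i))).card
          ≤ (Finset.univ.image (vY (Δ := Δ))).card := by
            apply Finset.card_le_card
            intro w hw
            rcases w with (i' | j') | (_ | _) <;>
              simp_all [SimpleGraph.mem_neighborFinset, G1_adj, adj1, vX, vY, va, vb]
        _ = Δ := by rw [Finset.card_image_of_injective _ vY_inj]; simp
  · by_cases hj : j = 0
    · subst hj
      calc ((G1 Δ).neighborFinset (Sum.inl (Sum.inr 0))).card
          ≤ (insert vb ((Finset.univ.image (vX (Δ := Δ))).erase (vX 0))).card := by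
            apply Finset.card_le_card
            intro w hw
            rcases w with (i' | j') | (_ | _) <;>
              simp_all [SimpleGraph.mem_neighborFinset, G1_adj, adj1, vX, vY, va, vb]
        _ ≤ ((Finset.univ.image (vX (Δ := Δ))).erase (vX 0)).card + 1 :=
            Finset.card_insert_le _ _
        _ ≤ Δ := by
            rw [Finset.card_erase_of_mem (by simp), Finset.card_image_of_injective _ vX_inj]
            simp; omega
    · calc ((G1 Δ).neighborFinset (Sum.inl (Sum.inr j))).card
          ≤ (Finset.univ.image (vX (Δ := Δ))).card := by
            apply Finset.card_le_card
            intro w hw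
            rcases w with (i' | j') | (_ | _) <;>
              simp_all [SimpleGraph.mem_neighborFinset, G1_adj, adj1, vX, vY, va, vb]
        _ = Δ := by rw [Finset.card_image_of_injective _ vX_inj]; simp
  · calc ((G1 Δ).neighborFinset (Sum.inr t)).card
        ≤ ({vX 0, vY 0} : Finset (Vt Δ)).card := by
          apply Finset.card_le_card
          intro w hw
          rcases w with (i' | j') | (_ | _) <;> rcases t <;>
            simp_all [SimpleGraph.mem_neighborFinset, G1_adj, adj1, vX, vY, va, vb]
      _ ≤ 2 := (Finset.card_insert_le _ _).trans (by simp)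
      _ ≤ Δ := hΔ

lemma maxDeg1 (hΔ : 2 ≤ Δ) : (G1 Δ).maxDegree = Δ := by
  refine le_antisymm (SimpleGraph.maxDegree_le_of_forall_degree_le _ _ (deg1_le hΔ)) ?_
  have h := SimpleGraph.degree_le_maxDegree (G1 Δ) (vX 1)
  rwa [deg1_X1 hΔ] at h

lemma maxDeg2 (hΔ : 2 ≤ Δ) : (G2 Δ).maxDegree = Δ := by
  refine le_antisymm (SimpleGraph.maxDegree_le_of_forall_degree_le _ _ (deg2_le hΔ)) ?_
  have h := SimpleGraph.degree_le_maxDegree (G2 Δ) (vY 0)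
  rwa [deg2_Y0] at h

/-! ### Bipartiteness -/

def cmap : Vt Δ → Fin 2
  | Sum.inl (Sum.inl _) => 0
  | Sum.inl (Sum.inr _) => 1
  | Sum.inr true => 1
  | Sum.inr false => 0

lemma bipartite : (G1 Δ ⊔ G2 Δ).Colorable 2 := by
  refine ⟨SimpleGraph.Coloring.mk cmap ?_⟩
  intro u v huv
  rw [SimpleGraph.sup_adj] at huv
  rcases u with (i | j) | (_ | _) <;> rcases v with (i' | j') | (_ | _) <;>
    simp_all [G1_adj, G2_adj, adj1, adj2, cmap, vX, vY, va, vb] <;> decide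

/-! ### No simultaneous Δ-colouring -/

lemma no_sim (hΔ : 2 ≤ Δ) :
    ¬ ∃ c : Sym2 (Vt Δ) → Fin Δ,
        IsProperEdgeColoring (G1 Δ) c ∧ IsProperEdgeColoring (G2 Δ) c := by
  rintro ⟨c, h1, h2⟩
  set α := c s(vX 0, vY 0) with hα
  have e1XY : ∀ i j : Fin Δ, ¬(i = 0 ∧ j = 0) → s(vX i, vY j) ∈ (G1 Δ).edgeSet :=
    fun i j h => (SimpleGraph.mem_edgeSet _).2 (adjXY1 i j h)
  have e1b : s(vb, vY 0) ∈ (G1 Δ).edgeSet := (SimpleGraph.mem_edgeSet _).2 adjbY1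
  have e1a : s(va, vX 0) ∈ (G1 Δ).edgeSet := (SimpleGraph.mem_edgeSet _).2 adjaX1
  have e2XY : ∀ i : Fin Δ, s(vX i, vY 0) ∈ (G2 Δ).edgeSet :=
    fun i => (SimpleGraph.mem_edgeSet _).2 (adjXY2 i)
  have e2a : s(va, vX 0) ∈ (G2 Δ).edgeSet := (SimpleGraph.mem_edgeSet _).2 adjaX2
  have neb : ∀ i : Fin Δ, s(vb, vY 0) ≠ s(vX i, vY 0) := by
    intro i; simp [Sym2.eq_iff, vb, vX, vY]
  have nea : ∀ j : Fin Δ, s(va, vX 0) ≠ s(vX 0, vY j) := by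
    intro j; simp [Sym2.eq_iff, va, vX, vY]
  -- Step A : the pendant edge at y has colour α
  have stepA : c s(vb, vY 0) = α := by
    set gy : Fin Δ → Fin Δ :=
      fun i => if i = 0 then c s(vb, vY 0) else c s(vX i, vY 0) with hgy
    have hinj : Function.Injective gy := by
      intro k k' h
      by_contra hkk
      by_cases hk : k = 0 <;> by_cases hk' : k' = 0
      · exact hkk (hk.trans hk'.symm)
      · rw [hgy] at h; simp only [hk, if_pos rfl, if_neg hk'] at h
        exact h1 _ e1b _ (e1XY k' 0 (by tauto)) (neb k')
          ⟨vY 0, Sym2.mem_mk_right _ _, Sym2.mem_mk_right _ _⟩ h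
      · rw [hgy] at h; simp only [hk', if_pos rfl, if_neg hk] at h
        exact h1 _ (e1XY k 0 (by tauto)) _ e1b (Ne.symm (neb k))
          ⟨vY 0, Sym2.mem_mk_right _ _, Sym2.mem_mk_right _ _⟩ h
      · rw [hgy] at h; simp only [if_neg hk, if_neg hk'] at h
        refine h1 _ (e1XY k 0 (by tauto)) _ (e1XY k' 0 (by tauto)) ?_
          ⟨vY 0, Sym2.mem_mk_right _ _, Sym2.mem_mk_right _ _⟩ h
        rw [Ne, eqXY]; tauto
    obtain ⟨k, hk⟩ := Finite.injective_iff_surjective.mp hinj α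
    by_cases hk0 : k = 0
    · rw [hgy] at hk; simp only [hk0, if_pos rfl] at hk; exact hk
    · exfalso
      rw [hgy] at hk; simp only [if_neg hk0] at hk
      refine h2 _ (e2XY k) _ (e2XY 0) ?_
        ⟨vY 0, Sym2.mem_mk_right _ _, Sym2.mem_mk_right _ _⟩ (hk.trans hα)
      rw [Ne, eqXY]; tauto
  -- Step B : x sees colour α on an edge into Y \ {y}
  have stepB : ∃ j0 : Fin Δ, j0 ≠ 0 ∧ c s(vX 0, vY j0) = α := by
    set gx : Fin Δ → Fin Δ :=
      fun j => if j = 0 then c s(va, vX 0) else c s(vX 0, vY j) with hgx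
    have hinj : Function.Injective gx := by
      intro k k' h
      by_contra hkk
      by_cases hk : k = 0 <;> by_cases hk' : k' = 0
      · exact hkk (hk.trans hk'.symm)
      · rw [hgx] at h; simp only [hk, if_pos rfl, if_neg hk'] at h
        exact h1 _ e1a _ (e1XY 0 k' (by tauto)) (nea k')
          ⟨vX 0, Sym2.mem_mk_right _ _, Sym2.mem_mk_left _ _⟩ h
      · rw [hgx] at h; simp only [hk', if_pos rfl, if_neg hk] at h
        exact h1 _ (e1XY 0 k (by tauto)) _ e1a (Ne.symm (nea k))
          ⟨vX 0, Sym2.mem_mk_left _ _, Sym2.mem_mk_right _ _⟩ h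
      · rw [hgx] at h; simp only [if_neg hk, if_neg hk'] at h
        refine h1 _ (e1XY 0 k (by tauto)) _ (e1XY 0 k' (by tauto)) ?_
          ⟨vX 0, Sym2.mem_mk_left _ _, Sym2.mem_mk_left _ _⟩ h
        rw [Ne, eqXY]; tauto
    obtain ⟨k, hk⟩ := Finite.injective_iff_surjective.mp hinj α
    by_cases hk0 : k = 0
    · exfalso
      rw [hgx] at hk; simp only [hk0, if_pos rfl] at hk
      exact h2 _ e2a _ (e2XY 0) (nea 0)
        ⟨vX 0, Sym2.mem_mk_right _ _, Sym2.mem_mk_left _ _⟩ (hk.trans hα)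
    · rw [hgx] at hk; simp only [if_neg hk0] at hk
      exact ⟨k, hk0, hk⟩
  obtain ⟨j0, hj00, hcj0⟩ := stepB
  -- Step C : every column has an α-edge avoiding row 0
  have stepC : ∀ i : Fin Δ, ∃ j, j ≠ 0 ∧ c s(vX i, vY j) = α := by
    intro i
    by_cases hi : i = 0
    · exact ⟨j0, hj00, by rw [hi]; exact hcj0⟩
    · have hinj : Function.Injective (fun j : Fin Δ => c s(vX i, vY j)) := by
        intro k k' h
        by_contra hkk
        refine h1 _ (e1XY i k (by tauto)) _ (e1XY i k' (by tauto)) ?_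
          ⟨vX i, Sym2.mem_mk_left _ _, Sym2.mem_mk_left _ _⟩ h
        rw [Ne, eqXY]; tauto
      obtain ⟨k, hk⟩ := Finite.injective_iff_surjective.mp hinj α
      refine ⟨k, ?_, hk⟩
      intro hk0
      subst hk0
      exact h1 _ (e1XY i 0 (by tauto)) _ e1b (Ne.symm (neb i))
        ⟨vY 0, Sym2.mem_mk_right _ _, Sym2.mem_mk_right _ _⟩ (hk.trans stepA.symm)
  choose W hW0 hWc using stepC
  have hWinj : Function.Injective W := by
    intro i i' h
    by_contra hii
    refine h1 _ (e1XY i (W i) (fun hh => hW0 i hh.2)) _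
      (e1XY i' (W i') (fun hh => hW0 i' hh.2)) ?_
      ⟨vY (W i), Sym2.mem_mk_right _ _, by rw [h]; exact Sym2.mem_mk_right _ _⟩
      ((hWc i).trans (hWc i').symm)
    rw [Ne, eqXY]; tauto
  obtain ⟨i, hi⟩ := Finite.injective_iff_surjective.mp hWinj 0
  exact hW0 i hi

end Gadget3

open Gadget Gadget2 Gadget3 in
/-- For every Δ ≥ 2 there are graphs G₁, G₂ of maximum degree Δ and chromatic
index Δ whose union is bipartite, yet no Δ-edge-colouring is simultaneously
proper for both. -/
theorem stmt_11 (Δ : ℕ) (hΔ : 2 ≤ Δ) :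
    ∃ (V : Type) (_ : Fintype V) (G₁ G₂ : SimpleGraph V)
      (_ : DecidableRel G₁.Adj) (_ : DecidableRel G₂.Adj),
      G₁.maxDegree = Δ ∧ G₂.maxDegree = Δ ∧
      sInf {n : ℕ | ∃ c : Sym2 V → Fin n, IsProperEdgeColoring G₁ c} = Δ ∧
      sInf {n : ℕ | ∃ c : Sym2 V → Fin n, IsProperEdgeColoring G₂ c} = Δ ∧
      (G₁ ⊔ G₂).Colorable 2 ∧
      ¬ ∃ c : Sym2 V → Fin Δ,
          IsProperEdgeColoring G₁ c ∧ IsProperEdgeColoring G₂ c := by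
  haveI : NeZero Δ := ⟨by omega⟩
  refine ⟨Vt Δ, inferInstance, G1 Δ, G2 Δ, inferInstance, inferInstance,
    maxDeg1 hΔ, maxDeg2 hΔ, ?_, ?_, bipartite, no_sim hΔ⟩
  · refine le_antisymm (Nat.sInf_le ⟨c1 Δ, c1_proper⟩) (le_csInf ⟨Δ, ⟨c1 Δ, c1_proper⟩⟩ ?_)
    rintro n ⟨c, hc⟩
    exact lb1 hΔ n c hc
  · refine le_antisymm (Nat.sInf_le ⟨c2 Δ, c2_proper hΔ⟩)
      (le_csInf ⟨Δ, ⟨c2 Δ, c2_proper hΔ⟩⟩ ?_)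
    rintro n ⟨c, hc⟩
    exact lb2 n c hc
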